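/- Let R be a commutative ring (with 1) and M an R-module that is finitely generated and free as an R-module, carrying a module structure over a (not necessarily commutative) associative R-algebra A. Let R be a domain with fraction field K and suppose \bar{K} ⊗ M is an irreducible (\bar{K} ⊗ A)-module. Then there exists a nonzero r ∈ R such that for every prime p ∈ Spec(R[1/r]), the module \bar{K_p} ⊗ M is an irreducible (\bar{K_p} ⊗ A)-module, where K_p = Frac(R/p). -/

import Mathlib

open scoped TensorProduct

universe u

set_option linter.unnecessarySimpa false

section

variable {R : Type u} [CommRing R] (A : Type u) [Ring A] [Algebra R A]
variable (M : Type u) [AddCommGroup M] [Module R M] [Module A M] [IsScalarTower R A M]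

/-- The action of `a : A` on `M` as an `R`-linear endomorphism. -/
def actMap (a : A) : M →ₗ[R] M where
  toFun m := a • m
  map_add' := smul_add a
  map_smul' r m := (smul_comm r a m).symm

/-- `S ⊗ M` is an irreducible `S ⊗ A`-module: it is nonzero, and the only `S`-subspaces stable
under all operators `1 ⊗ a`, `a : A`, are `0` and everything. -/
def IsIrreducibleBaseChange (S : Type u) [CommRing S] [Algebra R S] : Prop :=
  Nontrivial (S ⊗[R] M) ∧
    ∀ W : Submodule S (S ⊗[R] M),
      (∀ (a : A) (w : S ⊗[R] M), w ∈ W → LinearMap.lTensor S (actMap A M a) w ∈ W) →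
      W = ⊥ ∨ W = ⊤

/-- **Burnside's theorem**: over an algebraically closed field, a multiplicatively closed set of
endomorphisms containing `1` acting irreducibly spans all endomorphisms. -/
theorem burnside_span {L V : Type*} [Field L] [IsAlgClosed L] [AddCommGroup V] [Module L V]
    [FiniteDimensional L V] [Nontrivial V] (S : Set (Module.End L V))
    (h1 : (1 : Module.End L V) ∈ S) (hmul : ∀ f ∈ S, ∀ g ∈ S, f * g ∈ S)
    (hsimp : ∀ W : Submodule L V, (∀ f ∈ S, ∀ w ∈ W, f w ∈ W) → W = ⊥ ∨ W = ⊤) :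
    Submodule.span L S = ⊤ := by
  set B := Submodule.span L S with hB
  have hBmul : ∀ x ∈ B, ∀ y ∈ B, x * y ∈ B := by
    intro x hx
    refine Submodule.span_induction (p := fun x _ => ∀ y ∈ B, x * y ∈ B) ?_ ?_ ?_ ?_ hx
    · intro f hf y hy
      refine Submodule.span_induction (p := fun y _ => f * y ∈ B) ?_ ?_ ?_ ?_ hy
      · intro g hg; exact Submodule.subset_span (hmul f hf g hg)
      · simpa using Submodule.zero_mem B
      · intro y z _ _ hy hz; rw [mul_add]; exact Submodule.add_mem B hy hz
      · intro c y _ hy; rw [mul_smul_comm]; exact Submodule.smul_mem B c hy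
    · intro y hy; simpa using Submodule.zero_mem B
    · intro x z _ _ hx hz y hy; rw [add_mul]; exact Submodule.add_mem B (hx y hy) (hz y hy)
    · intro c x _ hx y hy; rw [smul_mul_assoc]; exact Submodule.smul_mem B c (hx y hy)
  have hB1 : (1 : Module.End L V) ∈ B := Submodule.subset_span h1
  -- W stable under S implies stable under B
  have hstabB : ∀ (W : Submodule L V), (∀ f ∈ S, ∀ w ∈ W, f w ∈ W) →
      ∀ f ∈ B, ∀ w ∈ W, f w ∈ W := by
    intro W hW f hf
    refine Submodule.span_induction (p := fun f _ => ∀ w ∈ W, f w ∈ W) hW ?_ ?_ ?_ hf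
    · intro w hw; simpa using W.zero_mem
    · intro f g _ _ hfw hgw w hw; simpa using W.add_mem (hfw w hw) (hgw w hw)
    · intro c f _ hfw w hw; simpa using W.smul_mem c (hfw w hw)
  -- step 0 : transitivity
  have step0 : ∀ v : V, v ≠ 0 → ∀ u : V, ∃ f ∈ B, f v = u := by
    intro v hv u
    set W : Submodule L V := B.map (LinearMap.applyₗ v) with hW
    have hWstab : ∀ f ∈ S, ∀ w ∈ W, f w ∈ W := by
      rintro f hf w ⟨g, hg, rfl⟩
      exact ⟨f * g, hBmul f (Submodule.subset_span hf) g hg, rfl⟩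
    have hvW : v ∈ W := ⟨1, hB1, by simp [LinearMap.applyₗ]; rfl⟩
    rcases hsimp W hWstab with h | h
    · exact absurd (h ▸ hvW) (by simpa using hv)
    · have : u ∈ W := h ▸ Submodule.mem_top
      rcases this with ⟨f, hf, hfv⟩
      exact ⟨f, hf, hfv⟩
  -- minimal rank element
  have hone_ne : (1 : Module.End L V) ≠ 0 := by
    obtain ⟨v, hv⟩ := exists_ne (0 : V)
    intro h
    exact hv (by simpa using LinearMap.congr_fun h v)
  set N : Set ℕ := {n | ∃ f ∈ B, f ≠ 0 ∧ Module.finrank L (LinearMap.range f) = n} with hN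
  have hNne : N.Nonempty := ⟨_, 1, hB1, hone_ne, rfl⟩
  obtain ⟨t, htB, ht0, htr⟩ := Nat.sInf_mem hNne
  set r := sInf N with hr
  have hmin : ∀ f ∈ B, f ≠ 0 → r ≤ Module.finrank L (LinearMap.range f) := by
    intro f hf hf0; exact Nat.sInf_le ⟨f, hf, hf0, rfl⟩
  -- t has rank one
  obtain ⟨x1, hx1⟩ : ∃ x, t x ≠ 0 := by
    by_contra h
    push_neg at h
    exact ht0 (LinearMap.ext fun x => by simpa using h x)
  set v := t x1 with hv
  have hrange1 : ∀ y : V, t y ∈ Submodule.span L {v} := by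
    by_contra hcon
    push_neg at hcon
    obtain ⟨x2, hx2⟩ := hcon
    obtain ⟨bb, hbbB, hbbv⟩ := step0 v hx1 x2
    set W₀ := LinearMap.range t with hW₀
    haveI : Nontrivial W₀ := Submodule.nontrivial_iff_ne_bot.2 (fun h =>
      hx1 ((Submodule.mem_bot L).1 (h ▸ LinearMap.mem_range_self t x1)))
    have hmaps : ∀ x ∈ W₀, (t ∘ₗ bb) x ∈ W₀ := fun x _ => LinearMap.mem_range_self t (bb x)
    set u : Module.End L W₀ := LinearMap.restrict (t ∘ₗ bb) hmaps with hu
    obtain ⟨μ, hμ⟩ := Module.End.exists_eigenvalue u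
    obtain ⟨w, hwμ, hw0⟩ := hμ.exists_hasEigenvector
    have hweq : u w = μ • w := Module.End.mem_eigenspace_iff.1 hwμ
    set s : Module.End L V := t * bb * t - μ • t with hs
    have hsB : s ∈ B := Submodule.sub_mem B (hBmul _ (hBmul t htB bb hbbB) t htB)
      (Submodule.smul_mem B μ htB)
    have hs0 : s ≠ 0 := by
      intro h
      have : t (bb (t x1)) - μ • t x1 = 0 := by
        simpa [hs, Module.End.mul_apply] using LinearMap.congr_fun h x1
      rw [← hv, hbbv, sub_eq_zero] at this
      exact hx2 (this ▸ Submodule.smul_mem _ μ (Submodule.mem_span_singleton_self v))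
    set q : W₀ →ₗ[L] V := (t ∘ₗ bb ∘ₗ W₀.subtype) - μ • W₀.subtype with hq
    have hrangele : LinearMap.range s ≤ LinearMap.range q := by
      rintro _ ⟨y, rfl⟩
      exact ⟨⟨t y, LinearMap.mem_range_self t y⟩, by simp [hq, hs, Module.End.mul_apply]⟩
    have hqw : q w = 0 := by
      have : ((u w : W₀) : V) = t (bb (w : V)) := by simp [hu, LinearMap.restrict_apply]
      rw [hweq] at this
      simp [hq, ← this]
    have hker : LinearMap.ker q ≠ ⊥ := by
      intro h
      exact hw0 (by simpa [h, Submodule.mem_bot] using (LinearMap.mem_ker.2 hqw))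
    have hkerpos : 0 < Module.finrank L (LinearMap.ker q) := by
      rcases Nat.eq_zero_or_pos (Module.finrank L (LinearMap.ker q)) with h | h
      · exact absurd (Submodule.finrank_eq_zero.1 h) hker
      · exact h
    have hrn := LinearMap.finrank_range_add_finrank_ker q
    have hW₀r : Module.finrank L W₀ = r := htr
    have hqlt : Module.finrank L (LinearMap.range q) < r := by omega
    have := hmin s hsB hs0
    have hle := Submodule.finrank_mono hrangele
    omega
  -- build the functional g
  have hcod : ∀ y, t y ∈ Submodule.span L {v} := hrange1
  set g : V →ₗ[L] L :=
    ((LinearEquiv.toSpanNonzeroSingleton L V v hx1).symm : (Submodule.span L {v}) →ₗ[L] L) ∘ₗ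
      (t.codRestrict (Submodule.span L {v}) hcod) with hg
  have hgy : ∀ y, t y = g y • v := by
    intro y
    have h1 : (LinearEquiv.toSpanNonzeroSingleton L V v hx1) (g y)
        = t.codRestrict (Submodule.span L {v}) hcod y := by
      simp [hg]
    have := congrArg (Subtype.val) h1
    simpa [LinearEquiv.toSpanNonzeroSingleton_apply] using this.symm
  have hgx1 : g x1 = 1 := by
    have h1 : g x1 • v = (1 : L) • v := by rw [← hgy x1, one_smul]
    exact smul_left_injective L hx1 h1
  -- U = top
  set U : Submodule L (Module.Dual L V) := B.map (LinearMap.llcomp L V V L g) with hU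
  have hUco : U.dualCoannihilator = ⊥ := by
    have hstab' : ∀ f ∈ S, ∀ y ∈ U.dualCoannihilator, f y ∈ U.dualCoannihilator := by
      intro f hf y hy
      rw [Submodule.mem_dualCoannihilator] at hy ⊢
      rintro φ ⟨f', hf', rfl⟩
      have : (LinearMap.llcomp L V V L g) (f' * f) ∈ U :=
        ⟨f' * f, hBmul f' hf' f (Submodule.subset_span hf), rfl⟩
      simpa [LinearMap.llcomp, Module.End.mul_apply] using hy _ this
    rcases hsimp U.dualCoannihilator hstab' with h | h
    · exact h
    · exfalso
      have : x1 ∈ U.dualCoannihilator := h ▸ Submodule.mem_top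
      rw [Submodule.mem_dualCoannihilator] at this
      have hgU : g ∈ U := ⟨1, hB1, by ext y; simp [LinearMap.llcomp]⟩
      simpa [hgx1] using this g hgU
  have hUtop : U = ⊤ := by
    apply Submodule.eq_top_of_finrank_eq
    have h1 := Subspace.finrank_add_finrank_dualCoannihilator_eq U
    rw [hUco] at h1
    simp only [finrank_bot, add_zero] at h1
    exact h1.trans Subspace.dual_finrank_eq.symm
  -- conclude
  rw [eq_top_iff]
  intro f _
  set e : Module.Basis (Fin (Module.finrank L V)) L V := Module.finBasis L V with he
  have hfi : ∀ i, ∃ P ∈ B, ∀ y, P y = (e.coord i) y • f (e i) := by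
    intro i
    have hcoord : e.coord i ∈ U := hUtop ▸ Submodule.mem_top
    rcases hcoord with ⟨bi, hbi, hbieq⟩
    obtain ⟨b', hb'B, hb'v⟩ := step0 v hx1 (f (e i))
    refine ⟨b' * t * bi, hBmul _ (hBmul b' hb'B t htB) bi hbi, fun y => ?_⟩
    have hgb : g (bi y) = (e.coord i) y := by
      have := congrFun (congrArg (fun (φ : V →ₗ[L] L) => (φ : V → L)) hbieq) y
      simpa [LinearMap.llcomp] using this
    simp [Module.End.mul_apply, hgy (bi y), hgb, hb'v]
  choose P hP hPeq using hfi
  have hfeq : f = ∑ i, P i := by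
    ext y
    have hy := e.sum_repr y
    calc f y = f (∑ i, e.repr y i • e i) := by rw [hy]
    _ = ∑ i, e.repr y i • f (e i) := by rw [map_sum]; simp
    _ = (∑ i, P i) y := by
      rw [LinearMap.sum_apply]
      refine Finset.sum_congr rfl fun i _ => ?_
      rw [hPeq i y]
      simp [Module.Basis.coord_apply]
  rw [hfeq]
  exact Submodule.sum_mem B fun i _ => hP i


lemma actMap_one' : actMap A M (1 : A) = (LinearMap.id : M →ₗ[R] M) := by
  ext m
  show (1 : A) • m = m
  rw [one_smul]

lemma actMap_mul' (a a' : A) : actMap A M (a * a') = (actMap (R := R) A M a).comp (actMap (R := R) A M a') := by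
  ext m
  show (a * a') • m = a • a' • m
  rw [mul_smul]

lemma baseChange_actMap_apply (L : Type u) [CommRing L] [Algebra R L] (a : A) (w : L ⊗[R] M) :
    (actMap A M a).baseChange L w = LinearMap.lTensor L (actMap A M a) w :=
  congrFun (LinearMap.baseChange_eq_ltensor (actMap A M a)) w

theorem irred_of_span (L : Type u) [Field L] [Algebra R L] (hnt : Nontrivial (L ⊗[R] M))
    (hspan : Submodule.span L (Set.range fun a : A => ((actMap A M a).baseChange L : (L ⊗[R] M) →ₗ[L] (L ⊗[R] M))) = ⊤) :
    IsIrreducibleBaseChange (R := R) A M L := by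
  refine ⟨hnt, fun W hW => ?_⟩
  have hstab : ∀ f : (L ⊗[R] M) →ₗ[L] (L ⊗[R] M), ∀ w ∈ W, f w ∈ W := by
    intro f
    have hf : f ∈ Submodule.span L (Set.range fun a : A => ((actMap A M a).baseChange L : (L ⊗[R] M) →ₗ[L] (L ⊗[R] M))) := by
      rw [hspan]; trivial
    refine Submodule.span_induction (p := fun f _ => ∀ w ∈ W, f w ∈ W) ?_ ?_ ?_ ?_ hf
    · rintro f ⟨a, rfl⟩ w hw
      rw [baseChange_actMap_apply]
      exact hW a w hw
    · intro w _; simpa using W.zero_mem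
    · intro f g _ _ hfw hgw w hw; simpa using W.add_mem (hfw w hw) (hgw w hw)
    · intro c f _ hfw w hw; simpa using W.smul_mem c (hfw w hw)
  by_cases hbot : W = ⊥
  · exact Or.inl hbot
  · right
    obtain ⟨w, hwW, hw0⟩ := Submodule.exists_mem_ne_zero_of_ne_bot hbot
    rw [eq_top_iff]
    intro v _
    obtain ⟨g, hg⟩ := LinearMap.exists_leftInverse_of_injective
      (LinearMap.toSpanSingleton L _ w) (LinearMap.ker_toSpanSingleton L hw0)
    have hgw : g w = 1 := by
      have := LinearMap.congr_fun hg 1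
      simpa using this
    have := hstab ((LinearMap.toSpanSingleton L _ v).comp g) w hwW
    simpa [hgw] using this

theorem span_of_irred (L : Type u) [Field L] [IsAlgClosed L] [Algebra R L]
    [FiniteDimensional L (L ⊗[R] M)] (h : IsIrreducibleBaseChange (R := R) A M L) :
    Submodule.span L
      (Set.range fun a : A => ((actMap A M a).baseChange L : (L ⊗[R] M) →ₗ[L] (L ⊗[R] M))) = ⊤ := by
  haveI : Nontrivial (L ⊗[R] M) := h.1
  apply burnside_span
  · refine ⟨1, ?_⟩
    show LinearMap.baseChange L (actMap (R := R) A M 1) = 1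
    rw [actMap_one']
    rw [show (1 : Module.End L (L ⊗[R] M)) = LinearMap.id from rfl]
    exact LinearMap.baseChange_id
  · rintro f ⟨a, rfl⟩ g ⟨a', rfl⟩
    refine ⟨a * a', ?_⟩
    show LinearMap.baseChange L (actMap (R := R) A M (a * a'))
      = LinearMap.baseChange L (actMap (R := R) A M a) * LinearMap.baseChange L (actMap (R := R) A M a')
    rw [actMap_mul', ← Module.End.mul_eq_comp, LinearMap.baseChange_mul]
  · intro W hW
    refine h.2 W fun a w hw => ?_
    have := hW _ ⟨a, rfl⟩ w hw
    rwa [baseChange_actMap_apply] at this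

theorem span_matrix_iff (L : Type u) [Field L] [Algebra R L] {ι : Type u} [Fintype ι]
    [DecidableEq ι] (b : Module.Basis ι R M) :
    Submodule.span L (Set.range fun a : A =>
        (LinearMap.toMatrix b b (actMap (R := R) A M a)).map (algebraMap R L)) = ⊤ ↔
      Submodule.span L
        (Set.range fun a : A =>
          ((actMap A M a).baseChange L : (L ⊗[R] M) →ₗ[L] (L ⊗[R] M))) = ⊤ := by
  set bL : Module.Basis ι L (L ⊗[R] M) := Algebra.TensorProduct.basis L b with hbL
  set E : ((L ⊗[R] M) →ₗ[L] (L ⊗[R] M)) ≃ₗ[L] Matrix ι ι L := LinearMap.toMatrix bL bL with hE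
  have hrange : (Set.range fun a : A =>
      (LinearMap.toMatrix b b (actMap (R := R) A M a)).map (algebraMap R L))
      = E '' (Set.range fun a : A =>
          ((actMap A M a).baseChange L : (L ⊗[R] M) →ₗ[L] (L ⊗[R] M))) := by
    rw [← Set.range_comp]
    apply congrArg
    funext a
    exact (LinearMap.toMatrix_baseChange L (actMap (R := R) A M a) b b).symm
  rw [hrange, ← LinearEquiv.coe_coe E, ← Submodule.map_span]
  constructor
  · intro htop
    apply Submodule.map_injective_of_injective
      (f := (E : ((L ⊗[R] M) →ₗ[L] (L ⊗[R] M)) →ₗ[L] Matrix ι ι L)) E.injective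
    rw [htop, Submodule.map_top]
    exact (LinearMap.range_eq_top.mpr E.surjective).symm
  · intro htop
    rw [htop, Submodule.map_top, LinearMap.range_eq_top]
    exact E.surjective


lemma stdBasis_repr_apply {L : Type*} [CommRing L] {ι : Type*} [Fintype ι] [DecidableEq ι]
    (N : Matrix ι ι L) (ij : ι × ι) : (Matrix.stdBasis L ι ι).repr N ij = N ij.1 ij.2 := by
  simp [Matrix.stdBasis, Module.Basis.repr_reindex, Matrix.ofLinearEquiv]

lemma stdBasis_det_eq {L : Type*} [Field L] {R' : Type*} [CommRing R'] [Algebra R' L]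
    {ι α : Type*} [Fintype ι] [DecidableEq ι] (ψ : α → Matrix ι ι R') (c : ι × ι → α) :
    (Matrix.stdBasis L ι ι).det (fun j => (ψ (c j)).map (algebraMap R' L))
      = algebraMap R' L (Matrix.det (Matrix.of fun i j : ι × ι => ψ (c j) i.1 i.2)) := by
  rw [Module.Basis.det_apply]
  have hmat : (Matrix.stdBasis L ι ι).toMatrix (fun j => (ψ (c j)).map (algebraMap R' L))
      = (Matrix.of fun i j : ι × ι => ψ (c j) i.1 i.2).map (algebraMap R' L) := by
    ext ij j
    rw [Module.Basis.toMatrix_apply, stdBasis_repr_apply]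
    rfl
  rw [hmat]
  exact (RingHom.map_det _ _).symm

theorem exists_det_ne_zero {L : Type*} [Field L] {R' : Type*} [CommRing R'] [Algebra R' L]
    {ι α : Type*} [Fintype ι] [DecidableEq ι] (ψ : α → Matrix ι ι R')
    (hspan : Submodule.span L (Set.range fun a => (ψ a).map (algebraMap R' L)) = ⊤) :
    ∃ c : ι × ι → α,
      algebraMap R' L (Matrix.det (Matrix.of fun i j : ι × ι => ψ (c j) i.1 i.2)) ≠ 0 := by
  classical
  obtain ⟨tset, hsub, hsp, hli⟩ :=
    exists_linearIndependent L (Set.range fun a => (ψ a).map (algebraMap R' L))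
  rw [hspan] at hsp
  haveI : Fintype tset := hli.set_finite_of_isNoetherian.fintype
  set v : Module.Basis tset L (Matrix ι ι L) :=
    Module.Basis.mk hli (by rw [Subtype.range_coe]; exact hsp.ge) with hv
  have hcard : Fintype.card (ι × ι) = Fintype.card tset := by
    rw [← Module.finrank_eq_card_basis v, ← Module.finrank_eq_card_basis (Matrix.stdBasis L ι ι)]
  let σ : ι × ι ≃ tset := Fintype.equivOfCardEq hcard
  have hmem : ∀ j : ι × ι, (σ j : Matrix ι ι L) ∈
      Set.range fun a => (ψ a).map (algebraMap R' L) := fun j => hsub (σ j).2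
  choose c hc using hmem
  refine ⟨c, ?_⟩
  rw [← stdBasis_det_eq ψ c]
  have hfam : (fun j : ι × ι => (ψ (c j)).map (algebraMap R' L)) = ⇑(v.reindex σ.symm) := by
    funext j
    simp only [Module.Basis.reindex_apply, Equiv.symm_symm, hv, Module.Basis.coe_mk]
    exact hc j
  rw [hfam]
  exact ((Matrix.stdBasis L ι ι).isUnit_det _).ne_zero

theorem span_top_of_det {L : Type*} [Field L] {R' : Type*} [CommRing R'] [Algebra R' L]
    {ι α : Type*} [Fintype ι] [DecidableEq ι] (ψ : α → Matrix ι ι R') (c : ι × ι → α)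
    (hdet : algebraMap R' L (Matrix.det (Matrix.of fun i j : ι × ι => ψ (c j) i.1 i.2)) ≠ 0) :
    Submodule.span L (Set.range fun a => (ψ a).map (algebraMap R' L)) = ⊤ := by
  have hunit : IsUnit ((Matrix.stdBasis L ι ι).det fun j => (ψ (c j)).map (algebraMap R' L)) := by
    rw [stdBasis_det_eq ψ c]
    exact isUnit_iff_ne_zero.mpr hdet
  obtain ⟨-, hsp⟩ := (Module.Basis.is_basis_iff_det (Matrix.stdBasis L ι ι)).mpr hunit
  rw [eq_top_iff, ← hsp]
  apply Submodule.span_mono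
  rintro x ⟨j, rfl⟩
  exact ⟨c j, rfl⟩

/-- Let `R` be a domain with fraction field `K`, `A` an associative `R`-algebra and `M` an
`A`-module which is finitely generated and free as an `R`-module.  If `K̄ ⊗ M` is an irreducible
`K̄ ⊗ A`-module, then there is a nonzero `r ∈ R` such that `K̄_p ⊗ M` is an irreducible
`K̄_p ⊗ A`-module for every prime `p` of `R[1/r]` (i.e. every prime of `R` with `r ∉ p`), where
`K_p = Frac(R/p)`. -/
theorem irreducible_on_dense_open [IsDomain R] [Module.Finite R M] [Module.Free R M]
    (hirr :
      letI : Algebra R (AlgebraicClosure (FractionRing R)) :=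
        ((algebraMap (FractionRing R) (AlgebraicClosure (FractionRing R))).comp
          (algebraMap R (FractionRing R))).toAlgebra
      IsIrreducibleBaseChange (R := R) A M (AlgebraicClosure (FractionRing R))) :
    ∃ r : R, r ≠ 0 ∧ ∀ (p : Ideal R) [p.IsPrime], r ∉ p →
      letI : Algebra R (AlgebraicClosure (FractionRing (R ⧸ p))) :=
        ((algebraMap (FractionRing (R ⧸ p)) (AlgebraicClosure (FractionRing (R ⧸ p)))).comp
          ((algebraMap (R ⧸ p) (FractionRing (R ⧸ p))).comp (Ideal.Quotient.mk p))).toAlgebra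
      IsIrreducibleBaseChange (R := R) A M (AlgebraicClosure (FractionRing (R ⧸ p))) := by
  classical
  letI : Algebra R (AlgebraicClosure (FractionRing R)) :=
    ((algebraMap (FractionRing R) (AlgebraicClosure (FractionRing R))).comp
      (algebraMap R (FractionRing R))).toAlgebra
  have hirr' : IsIrreducibleBaseChange (R := R) A M (AlgebraicClosure (FractionRing R)) := hirr
  set Kbar := AlgebraicClosure (FractionRing R) with hKbar
  set ι := Module.Free.ChooseBasisIndex R M with hι
  set b : Module.Basis ι R M := Module.Free.chooseBasis R M with hb
  haveI : DecidableEq ι := Classical.decEq ι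
  haveI hnt : Nontrivial (Kbar ⊗[R] M) := hirr'.1
  haveI hne : Nonempty ι := by
    by_contra hne
    haveI : IsEmpty ι := not_nonempty_iff.mp hne
    haveI : Subsingleton (ι →₀ Kbar) := ⟨fun f g => Finsupp.ext fun i => isEmptyElim i⟩
    haveI : Subsingleton (Kbar ⊗[R] M) :=
      (Algebra.TensorProduct.basis Kbar b).repr.toEquiv.subsingleton
    exact absurd hnt (not_nontrivial_iff_subsingleton.mpr this)
  haveI : FiniteDimensional Kbar (Kbar ⊗[R] M) :=
    Module.Finite.of_basis (Algebra.TensorProduct.basis Kbar b)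
  have hspanE := span_of_irred A M Kbar hirr'
  have hspanMat := (span_matrix_iff A M Kbar b).mpr hspanE
  obtain ⟨c, hdet⟩ := exists_det_ne_zero
    (fun a : A => LinearMap.toMatrix b b (actMap (R := R) A M a)) hspanMat
  set r : R := Matrix.det (Matrix.of fun i j : ι × ι =>
    (LinearMap.toMatrix b b (actMap (R := R) A M (c j))) i.1 i.2) with hr
  refine ⟨r, fun h0 => hdet (by rw [h0, map_zero]), ?_⟩
  intro p hp hrp
  letI : Algebra R (AlgebraicClosure (FractionRing (R ⧸ p))) :=
    ((algebraMap (FractionRing (R ⧸ p)) (AlgebraicClosure (FractionRing (R ⧸ p)))).comp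
      ((algebraMap (R ⧸ p) (FractionRing (R ⧸ p))).comp (Ideal.Quotient.mk p))).toAlgebra
  show IsIrreducibleBaseChange (R := R) A M (AlgebraicClosure (FractionRing (R ⧸ p)))
  set Lp := AlgebraicClosure (FractionRing (R ⧸ p)) with hLp
  have hrp0 : algebraMap R Lp r ≠ 0 := by
    have h1 : Ideal.Quotient.mk p r ≠ 0 := by
      simpa [Ideal.Quotient.eq_zero_iff_mem] using hrp
    have h2 : algebraMap (R ⧸ p) (FractionRing (R ⧸ p)) (Ideal.Quotient.mk p r) ≠ 0 := fun h =>
      h1 (IsFractionRing.injective (R ⧸ p) (FractionRing (R ⧸ p)) (by simpa using h))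
    intro h
    have h3 : algebraMap (FractionRing (R ⧸ p)) Lp
        (algebraMap (R ⧸ p) (FractionRing (R ⧸ p)) (Ideal.Quotient.mk p r)) = 0 := h
    exact h2 ((algebraMap (FractionRing (R ⧸ p)) Lp).injective (h3.trans (map_zero _).symm))
  have hspanMatp := span_top_of_det
    (fun a : A => LinearMap.toMatrix b b (actMap (R := R) A M a)) c hrp0
  have hspanEp := (span_matrix_iff A M Lp b).mp hspanMatp
  haveI : Nontrivial (Lp ⊗[R] M) :=
    ⟨⟨(Algebra.TensorProduct.basis Lp b) (Classical.arbitrary ι), 0,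
      Module.Basis.ne_zero (Algebra.TensorProduct.basis Lp b) (Classical.arbitrary ι)⟩⟩
  exact irred_of_span A M Lp this hspanEp


end
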